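/- For any vector x in R_{≥0}^n and any real ℓ in [0,n], the top-ℓ norm of x equals the minimum over t ≥ 0 of (∑_{j=1}^n (x_j - t)^+ + ℓt), where the top-ℓ norm is the maximum of α·x over α ∈ [0,1]^n with |α|_1 = ℓ. Moreover, when ℓ is a positive integer, the minimum is achieved when t is the ℓ-th largest coordinate of x. -/
import Mathlib


open Finset

/-- The top-ℓ norm of `x ∈ ℝ_{≥0}^n` for real `ℓ ∈ [0,n]`:
the maximum of `∑ α_j x_j` over `α ∈ [0,1]^n` with `∑ α_j = ℓ`. -/
noncomputable def topNorm (n : ℕ) (x : Fin n → ℝ) (ℓ : ℝ) : ℝ :=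
  sSup {s : ℝ | ∃ α : Fin n → ℝ, (∀ j, 0 ≤ α j ∧ α j ≤ 1) ∧ (∑ j, α j) = ℓ ∧
    s = ∑ j, α j * x j}

private lemma weak_aux (n : ℕ) (x : Fin n → ℝ) (ℓ t : ℝ) (ht : 0 ≤ t)
    (α : Fin n → ℝ) (hα : ∀ j, 0 ≤ α j ∧ α j ≤ 1) (hsum : (∑ j, α j) = ℓ) :
    ∑ j, α j * x j ≤ (∑ j, max (x j - t) 0) + ℓ * t := by
  have h1 : ∑ j, α j * x j = (∑ j, α j * (x j - t)) + ℓ * t := by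
    rw [← hsum, Finset.sum_mul, ← Finset.sum_add_distrib]
    exact Finset.sum_congr rfl fun j _ => by ring
  rw [h1]
  gcongr with j hj
  rcases le_total (x j) t with h | h
  · exact le_trans (mul_nonpos_of_nonneg_of_nonpos (hα j).1 (by linarith)) (le_max_right _ _)
  · refine le_trans ?_ (le_max_left _ _)
    nlinarith [(hα j).1, (hα j).2]

private lemma core (n : ℕ) (x : Fin n → ℝ) (ℓ : ℝ)
    (σ : Equiv.Perm (Fin n)) (hσ : ∀ i j : Fin n, i ≤ j → x (σ j) ≤ x (σ i))
    (k : Fin n) (h1 : (k : ℝ) ≤ ℓ) (h2 : ℓ ≤ (k : ℝ) + 1) :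
    ∃ α : Fin n → ℝ, (∀ j, 0 ≤ α j ∧ α j ≤ 1) ∧ (∑ j, α j) = ℓ ∧
      ∑ j, α j * x j = (∑ j, max (x j - x (σ k)) 0) + ℓ * x (σ k) := by
  classical
  set t := x (σ k) with ht
  set g : Fin n → ℝ := fun i => if i < k then 1 else if i = k then ℓ - (k : ℝ) else 0 with hg
  have hfil : Finset.univ.filter (fun i : Fin n => i < k) = Finset.Iio k := by
    ext i; simp
  have key : ∀ c : Fin n → ℝ, ∑ i : Fin n, (if i < k then c i else 0) = ∑ i ∈ Finset.Iio k, c i := by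
    intro c
    rw [← Finset.sum_filter, hfil]
  have hcard : (Finset.Iio k).card = (k : ℕ) := by simp
  refine ⟨fun j => g (σ.symm j), ?_, ?_, ?_⟩
  · intro j
    simp only [hg]
    split_ifs <;> constructor <;> push_cast <;> linarith
  · have e0 : ∑ j, g (σ.symm j) = ∑ i, g i := Equiv.sum_comp σ.symm g
    rw [e0]
    have hpt : ∀ i, g i = (if i < k then (1:ℝ) else 0) + (if i = k then ℓ - (k:ℝ) else 0) := by
      intro i
      simp only [hg]
      rcases lt_trichotomy i k with h | h | h
      · simp [h, ne_of_lt h]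
      · simp [h]
      · simp [not_lt.mpr h.le, (ne_of_lt h).symm]
    rw [Finset.sum_congr rfl fun i _ => hpt i, Finset.sum_add_distrib, key fun _ => (1:ℝ)]
    rw [Finset.sum_const, hcard, Finset.sum_ite_eq' Finset.univ k fun _ => ℓ - (k:ℝ)]
    simp
  · have e1 : ∑ j, g (σ.symm j) * x j = ∑ i, g i * x (σ i) := by
      rw [← Equiv.sum_comp σ (fun j => g (σ.symm j) * x j)]
      simp
    have e2 : ∑ j, max (x j - t) 0 = ∑ i, max (x (σ i) - t) 0 :=
      (Equiv.sum_comp σ (fun j => max (x j - t) 0)).symm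
    have e3 : ∑ i, g i * x (σ i) = (∑ i ∈ Finset.Iio k, x (σ i)) + (ℓ - (k:ℝ)) * t := by
      have hpt : ∀ i, g i * x (σ i)
          = (if i < k then x (σ i) else 0) + (if i = k then (ℓ - (k:ℝ)) * t else 0) := by
        intro i
        simp only [hg]
        rcases lt_trichotomy i k with h | h | h
        · simp [h, ne_of_lt h]
        · subst h; simp [ht]
        · simp [not_lt.mpr h.le, (ne_of_lt h).symm]
      rw [Finset.sum_congr rfl fun i _ => hpt i, Finset.sum_add_distrib, key fun i => x (σ i)]
      rw [Finset.sum_ite_eq' Finset.univ k fun _ => (ℓ - (k:ℝ)) * t]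
      simp
    have e4 : ∑ i, max (x (σ i) - t) 0 = (∑ i ∈ Finset.Iio k, x (σ i)) - (k:ℝ) * t := by
      have hpt : ∀ i, max (x (σ i) - t) 0 = if i < k then x (σ i) - t else 0 := by
        intro i
        split_ifs with h
        · exact max_eq_left (by have := hσ i k h.le; linarith)
        · exact max_eq_right (by have := hσ k i (not_lt.mp h); linarith)
      rw [Finset.sum_congr rfl fun i _ => hpt i, key fun i => x (σ i) - t,
        Finset.sum_sub_distrib, Finset.sum_const, hcard]
      push_cast
      ring
    rw [e1, e2, e3, e4]
    ring

/-- The top-ℓ norm equals `min_{t ≥ 0} (∑_j (x_j - t)^+ + ℓ t)`; moreover, when `ℓ` is a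
positive integer, the minimum is attained at `t` the ℓ-th largest coordinate of `x`. -/
theorem stmt0 (n : ℕ) (x : Fin n → ℝ) (hx : ∀ j, 0 ≤ x j) (ℓ : ℝ)
    (hℓ0 : 0 ≤ ℓ) (hℓn : ℓ ≤ n) :
    topNorm n x ℓ =
      sInf {v : ℝ | ∃ t : ℝ, 0 ≤ t ∧ v = (∑ j, max (x j - t) 0) + ℓ * t} ∧
    ∀ (σ : Equiv.Perm (Fin n)) (m : Fin n),
      (∀ i j : Fin n, i ≤ j → x (σ j) ≤ x (σ i)) → ((m : ℝ) + 1 = ℓ) →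
      (∑ j, max (x j - x (σ m)) 0) + ℓ * x (σ m) = topNorm n x ℓ := by
  classical
  set S : Set ℝ := {s : ℝ | ∃ α : Fin n → ℝ, (∀ j, 0 ≤ α j ∧ α j ≤ 1) ∧ (∑ j, α j) = ℓ ∧
    s = ∑ j, α j * x j} with hSdef
  set T : Set ℝ := {v : ℝ | ∃ t : ℝ, 0 ≤ t ∧ v = (∑ j, max (x j - t) 0) + ℓ * t} with hTdef
  have htop : topNorm n x ℓ = sSup S := rfl
  have weak : ∀ s ∈ S, ∀ v ∈ T, s ≤ v := by
    rintro s ⟨α, hα, hsum, rfl⟩ v ⟨t, htpos, rfl⟩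
    exact weak_aux n x ℓ t htpos α hα hsum
  -- a point in both S and T
  have pair : ∃ s : ℝ, s ∈ S ∧ s ∈ T := by
    rcases Nat.eq_zero_or_pos n with hn | hn
    · subst hn
      have hℓ : ℓ = 0 := le_antisymm (by exact_mod_cast hℓn) hℓ0
      refine ⟨0, ⟨fun _ => 0, fun j => by norm_num, by simp [hℓ], by simp⟩,
        ⟨0, le_refl 0, by simp⟩⟩
    · set σ : Equiv.Perm (Fin n) := Tuple.sort (fun i => -x i) with hσdef
      have hσ : ∀ i j : Fin n, i ≤ j → x (σ j) ≤ x (σ i) := by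
        intro i j hij
        have := Tuple.monotone_sort (fun i => -x i) hij
        simpa [hσdef] using this
      set k : Fin n := ⟨min ⌊ℓ⌋₊ (n - 1), by omega⟩ with hk
      have hk1 : (k : ℝ) ≤ ℓ := by
        have h := Nat.floor_le hℓ0
        have : ((min ⌊ℓ⌋₊ (n - 1) : ℕ) : ℝ) ≤ (⌊ℓ⌋₊ : ℝ) := by
          exact_mod_cast Nat.min_le_left _ _
        simpa [hk] using this.trans h
      have hk2 : ℓ ≤ (k : ℝ) + 1 := by
        rcases le_or_gt ⌊ℓ⌋₊ (n - 1) with h | h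
        · have : (k : ℕ) = ⌊ℓ⌋₊ := by simp [hk, min_eq_left h]
          rw [show ((k : Fin n) : ℝ) = ((k : ℕ) : ℝ) from rfl, this]
          exact (Nat.lt_floor_add_one ℓ).le
        · have hkn : (k : ℕ) = n - 1 := by simp [hk, min_eq_right h.le]
          have hfl : n ≤ ⌊ℓ⌋₊ := by omega
          have : (n : ℝ) ≤ ℓ := le_trans (by exact_mod_cast hfl) (Nat.floor_le hℓ0)
          have hℓeq : ℓ = n := le_antisymm hℓn this
          rw [show ((k : Fin n) : ℝ) = ((k : ℕ) : ℝ) from rfl, hkn, hℓeq]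
          have : ((n - 1 : ℕ) : ℝ) = (n : ℝ) - 1 := by
            have : (1:ℕ) ≤ n := hn
            push_cast [Nat.cast_sub this]
            ring
          rw [this]; ring_nf; exact le_refl _
      obtain ⟨α, hα, hsum, heq⟩ := core n x ℓ σ hσ k hk1 hk2
      exact ⟨∑ j, α j * x j, ⟨α, hα, hsum, rfl⟩, ⟨x (σ k), hx _, heq⟩⟩
  obtain ⟨s₀, hs₀S, hs₀T⟩ := pair
  have hSne : S.Nonempty := ⟨s₀, hs₀S⟩
  have hTne : T.Nonempty := ⟨s₀, hs₀T⟩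
  have hSbdd : BddAbove S := ⟨s₀, fun s hs => weak s hs s₀ hs₀T⟩
  have hTbdd : BddBelow T := ⟨s₀, fun v hv => weak s₀ hs₀S v hv⟩
  have eq1 : sSup S = sInf T := by
    refine le_antisymm ?_ ?_
    · exact le_csInf hTne fun v hv => csSup_le hSne fun s hs => weak s hs v hv
    · exact le_trans (csInf_le hTbdd hs₀T) (le_csSup hSbdd hs₀S)
  refine ⟨by rw [htop, eq1], ?_⟩
  intro σ m hσ hm
  obtain ⟨α, hα, hsum, heq⟩ := core n x ℓ σ hσ m (by linarith [hm]) (by linarith [hm])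
  have hmemS : (∑ j, α j * x j) ∈ S := ⟨α, hα, hsum, rfl⟩
  have hmemT : (∑ j, α j * x j) ∈ T := ⟨x (σ m), hx _, heq⟩
  rw [← heq, htop]
  exact le_antisymm (le_csSup hSbdd hmemS) (by rw [eq1]; exact csInf_le hTbdd hmemT)
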